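/- Let f(Z,T) ∈ k[Z,T] be such that k[Z,T]/(f) ≅ k[W] (a polynomial ring in one variable), and suppose there is a system of coordinates Z₁, T₁ of k[Z,T] (i.e., k[Z₁,T₁] = k[Z,T]) with f = b₀(Z₁) + b₁(Z₁)T₁ for some b₀, b₁ ∈ k[Z₁]. Then k[Z,T] = k[f][g] for some g, i.e., k[Z,T] is a polynomial ring in one variable over k[f]. -/

import Mathlib

open MvPolynomial

theorem endo_inj' {R : Type*} [CommRing R] [IsNoetherianRing R] (f : R →+* R)
    (hs : Function.Surjective f) : Function.Injective f := by
  have key : ∀ n : ℕ, Function.Surjective (f^n : R →+* R) := by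
    intro n
    induction n with
    | zero => simpa using Function.surjective_id
    | succ n ih => rw [pow_succ]; exact (RingHom.coe_mul _ _ ▸ ih.comp hs : _)
  let I : ℕ →o Ideal R := ⟨fun n => RingHom.ker (f^n), by
    intro m n hmn x hx
    simp only [RingHom.mem_ker] at *
    obtain ⟨c, rfl⟩ := Nat.exists_eq_add_of_le hmn
    rw [add_comm, pow_add, RingHom.coe_mul, Function.comp_apply, hx, map_zero]⟩
  obtain ⟨n, hn⟩ := (monotone_stabilizes_iff_noetherian.mpr inferInstance) I
  rw [injective_iff_map_eq_zero]
  intro x hx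
  obtain ⟨y, rfl⟩ := key n x
  have : y ∈ RingHom.ker (f^(n+1)) := by
    rw [RingHom.mem_ker, pow_succ', RingHom.coe_mul, Function.comp_apply]
    exact hx
  have h2 : y ∈ RingHom.ker (f^n) := by rw [show RingHom.ker (f^n : R →+* R) = I n from rfl, hn (n+1) (by omega)]; exact this
  exact h2

section helpers
open Polynomial
variable {k : Type*} [Field k]


-- algebraic elements of k[W] are constants
theorem alg_constant (t : Polynomial k) (h : IsAlgebraic k t) : ∃ α : k, t = Polynomial.C α := by
  rcases eq_or_ne t.natDegree 0 with h0 | h0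
  · exact ⟨t.coeff 0, (Polynomial.eq_C_of_natDegree_eq_zero h0)⟩
  · exfalso
    obtain ⟨p, hp0, hp⟩ := h
    have hcomp : p.comp t = 0 := by
      rw [← hp]; simp [Polynomial.aeval_def, Polynomial.comp, Polynomial.algebraMap_eq]
    have := Polynomial.natDegree_comp (p := p) (q := t)
    rw [hcomp] at this
    simp only [Polynomial.natDegree_zero] at this
    have hpdeg : p.natDegree = 0 := by
      rcases Nat.mul_eq_zero.mp this.symm with h | h
      · exact h
      · exact absurd h h0
    obtain ⟨a, ha⟩ := Polynomial.natDegree_eq_zero.mp hpdeg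
    rw [← ha] at hcomp hp0
    simp only [Polynomial.C_comp] at hcomp
    exact hp0 (by rw [← hcomp])

-- Polynomial (Polynomial k) is not a PID
theorem not_pid_A (h : IsPrincipalIdealRing (Polynomial (Polynomial k))) : False := by
  obtain ⟨p, hp⟩ := (h.principal
    (Ideal.span {Polynomial.X, Polynomial.C Polynomial.X})).principal
  rw [Ideal.submodule_span_eq] at hp
  have hX : (Polynomial.X : Polynomial (Polynomial k)) ∈
      Ideal.span {Polynomial.X, Polynomial.C Polynomial.X} := Ideal.subset_span (by simp)
  have hCX : (Polynomial.C Polynomial.X : Polynomial (Polynomial k)) ∈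
      Ideal.span {Polynomial.X, Polynomial.C Polynomial.X} := Ideal.subset_span (by simp)
  rw [hp, Ideal.mem_span_singleton] at hX hCX
  have hdeg : p.degree ≤ 0 := by
    simpa using Polynomial.degree_le_of_dvd hCX (by simp [Polynomial.X_ne_zero])
  have hps := Polynomial.eq_C_of_degree_le_zero hdeg
  rw [hps] at hX
  obtain ⟨h1, hh1⟩ := hX
  have hs : IsUnit (p.coeff 0) := by
    have := congrArg (fun q => Polynomial.coeff q 1) hh1
    simp [Polynomial.coeff_C_mul] at this
    exact IsUnit.of_mul_eq_one _ (by rw [← this])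
  have hJtop : Ideal.span {(Polynomial.X : Polynomial (Polynomial k)),
      Polynomial.C Polynomial.X} = ⊤ := by
    rw [hp, hps, Ideal.span_singleton_eq_top]
    exact hs.map Polynomial.C
  have h1J : (1 : Polynomial (Polynomial k)) ∈
      Ideal.span {(Polynomial.X : Polynomial (Polynomial k)), Polynomial.C Polynomial.X} :=
    hJtop ▸ Submodule.mem_top
  rw [Ideal.mem_span_pair] at h1J
  obtain ⟨a, b, hab⟩ := h1J
  have h2 := congrArg (Polynomial.eval (0 : Polynomial k)) hab
  simp only [Polynomial.eval_add, Polynomial.eval_mul, Polynomial.eval_X, Polynomial.eval_C,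
    Polynomial.eval_one, mul_zero, zero_add] at h2
  rw [mul_comm] at h2
  exact Polynomial.not_isUnit_X (R := k) (IsUnit.of_mul_eq_one _ h2)


set_option maxHeartbeats 1000000 in
set_option synthInstance.maxHeartbeats 1000000 in
theorem core (b₀ b₁ : Polynomial k)
    (hq : Nonempty ((Polynomial (Polynomial k) ⧸
        Ideal.span {(Polynomial.C b₀ + Polynomial.C b₁ * Polynomial.X :
          Polynomial (Polynomial k))}) ≃ₐ[k] Polynomial k)) :
    (∃ c : k, c ≠ 0 ∧ b₁ = Polynomial.C c) ∨
      (b₁ = 0 ∧ ∃ c a : k, c ≠ 0 ∧ b₀ = Polynomial.C c * (Polynomial.X - Polynomial.C a)) := by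
  classical
  obtain ⟨q⟩ := hq
  by_cases hb₁ : b₁ = 0
  · right
    refine ⟨hb₁, ?_⟩
    subst hb₁
    rw [map_zero, zero_mul, add_zero] at q
    by_cases hb₀ : b₀ = 0
    · exfalso
      rw [hb₀, map_zero, Set.singleton_zero, Ideal.span_zero] at q
      have e : Polynomial (Polynomial k) ≃+* Polynomial k :=
        (RingEquiv.quotientBot (Polynomial (Polynomial k))).symm.trans q.toRingEquiv
      exact not_pid_A (IsPrincipalIdealRing.of_surjective e.symm.toRingHom e.symm.surjective)
    · have hmap : Ideal.map (Polynomial.C : Polynomial k →+* Polynomial (Polynomial k))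
          (Ideal.span {b₀}) = Ideal.span {Polynomial.C b₀} := by
        rw [Ideal.map_span, Set.image_singleton]
      let e2 : Polynomial (Polynomial k ⧸ Ideal.span {b₀}) ≃+* Polynomial k :=
        ((Ideal.polynomialQuotientEquivQuotientPolynomial _).trans
          (Ideal.quotEquivOfEq hmap)).trans q.toRingEquiv
      have hC : ∀ s : Polynomial k,
          e2 (Polynomial.C (Ideal.Quotient.mk (Ideal.span {b₀}) s)) =
            q (Ideal.Quotient.mk (Ideal.span {Polynomial.C b₀}) (Polynomial.C s)) := by
        intro s
        have h1 : (Polynomial.C (Ideal.Quotient.mk (Ideal.span {b₀}) s) :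
            Polynomial (Polynomial k ⧸ Ideal.span {b₀})) =
            (Polynomial.C s).map (Ideal.Quotient.mk (Ideal.span {b₀})) := by
          rw [Polynomial.map_C]
        show (q.toRingEquiv) ((Ideal.quotEquivOfEq hmap)
          ((Ideal.polynomialQuotientEquivQuotientPolynomial _) _)) = _
        rw [h1, Ideal.polynomialQuotientEquivQuotientPolynomial_map_mk, Ideal.quotEquivOfEq_mk]
        rfl
      haveI : IsDomain (Polynomial (Polynomial k ⧸ Ideal.span {b₀})) :=
        Function.Injective.isDomain e2.toRingHom e2.injective
      haveI hLdom : IsDomain (Polynomial k ⧸ Ideal.span {b₀}) :=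
        Function.Injective.isDomain (Polynomial.C :
          (Polynomial k ⧸ Ideal.span {b₀}) →+* _) Polynomial.C_injective
      have hprime : Prime b₀ := (Ideal.span_singleton_prime hb₀).mp
        ((Ideal.Quotient.isDomain_iff_prime _).mp hLdom)
      haveI : Module.Finite k (Polynomial k ⧸ Ideal.span {b₀}) :=
        Module.Finite.of_basis (AdjoinRoot.powerBasis hb₀).basis
      -- the k-algebra hom from the quotient to k[X]
      have hcomm : ∀ α : k, e2 (Polynomial.C (algebraMap k (Polynomial k ⧸ Ideal.span {b₀}) α)) =
          Polynomial.C α := by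
        intro α
        have h0 : algebraMap k (Polynomial k ⧸ Ideal.span {b₀}) α =
            Ideal.Quotient.mk (Ideal.span {b₀}) (Polynomial.C α) := rfl
        rw [h0, hC]
        have h1 : (Ideal.Quotient.mk (Ideal.span {Polynomial.C b₀}))
            (Polynomial.C (Polynomial.C α)) =
            @algebraMap k (Polynomial (Polynomial k) ⧸ Ideal.span {Polynomial.C b₀}) _
              (Ideal.Quotient.commRing _).toCommSemiring.toSemiring _ α :=
            Ideal.Quotient.mk_algebraMap k _ α
        rw [h1, AlgEquiv.commutes, Polynomial.algebraMap_eq]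
      let ψ : (Polynomial k ⧸ Ideal.span {b₀}) →ₐ[k] Polynomial k :=
        { toRingHom := e2.toRingHom.comp (Polynomial.C :
            (Polynomial k ⧸ Ideal.span {b₀}) →+* _),
          commutes' := hcomm }
      have halg : ∀ ℓ : (Polynomial k ⧸ Ideal.span {b₀}), IsAlgebraic k (ψ ℓ) := fun ℓ =>
        ((IsIntegral.of_finite k ℓ).isAlgebraic).algHom ψ
      obtain ⟨α, hα⟩ := alg_constant _ (halg (Ideal.Quotient.mk _ Polynomial.X))
      have hmkeq : Ideal.Quotient.mk (Ideal.span {b₀}) Polynomial.X =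
          Ideal.Quotient.mk (Ideal.span {b₀}) (Polynomial.C α) := by
        have hinj : Function.Injective
            (fun ℓ : Polynomial k ⧸ Ideal.span {b₀} => e2 (Polynomial.C ℓ)) :=
          fun x y hxy => Polynomial.C_injective (e2.injective hxy)
        apply hinj
        show e2 (Polynomial.C (Ideal.Quotient.mk (Ideal.span {b₀}) Polynomial.X)) =
          e2 (Polynomial.C (Ideal.Quotient.mk (Ideal.span {b₀}) (Polynomial.C α)))
        have h2 : e2 (Polynomial.C (Ideal.Quotient.mk (Ideal.span {b₀}) Polynomial.X)) =
            Polynomial.C α := hα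
        have h3 : Ideal.Quotient.mk (Ideal.span {b₀}) (Polynomial.C α) =
            algebraMap k (Polynomial k ⧸ Ideal.span {b₀}) α := rfl
        rw [h2, h3, hcomm]
      have hdvd : b₀ ∣ Polynomial.X - Polynomial.C α := by
        rw [← Ideal.mem_span_singleton, ← Ideal.Quotient.mk_eq_mk_iff_sub_mem]
        exact hmkeq
      obtain ⟨h, hh⟩ := hdvd
      have hXα : (Polynomial.X - Polynomial.C α : Polynomial k) ≠ 0 :=
        Polynomial.X_sub_C_ne_zero α
      have hh0 : h ≠ 0 := fun h0 => hXα (by rw [hh, h0, mul_zero])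
      have hnd : (1 : ℕ) = b₀.natDegree + h.natDegree := by
        have := congrArg Polynomial.natDegree hh
        rwa [Polynomial.natDegree_X_sub_C, Polynomial.natDegree_mul hb₀ hh0] at this
      have hb₀nd : b₀.natDegree ≠ 0 := by
        intro hnd0
        obtain ⟨c, hc⟩ := Polynomial.natDegree_eq_zero.mp hnd0
        have hc0 : c ≠ 0 := fun h0 => hb₀ (by rw [← hc, h0, map_zero])
        exact hprime.not_unit (by rw [← hc]; exact (Polynomial.isUnit_C).mpr (hc0.isUnit))
      have hhnd : h.natDegree = 0 := by omega
      obtain ⟨c', hc'⟩ := Polynomial.natDegree_eq_zero.mp hhnd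
      have hc'0 : c' ≠ 0 := fun h0 => hh0 (by rw [← hc', h0, map_zero])
      refine ⟨c'⁻¹, α, inv_ne_zero hc'0, ?_⟩
      rw [hh, ← hc', mul_comm b₀, ← mul_assoc, ← map_mul, inv_mul_cancel₀ hc'0, map_one, one_mul]
  · left
    set F : Polynomial (Polynomial k) := Polynomial.C b₀ + Polynomial.C b₁ * Polynomial.X with hF
    have hFc1 : F.coeff 1 = b₁ := by simp [hF, Polynomial.coeff_C]
    have hF0 : F ≠ 0 := fun h => hb₁ (by rw [← hFc1, h, Polynomial.coeff_zero])
    have hdom : IsDomain (Polynomial (Polynomial k) ⧸ Ideal.span {F}) :=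
      Function.Injective.isDomain q.toRingEquiv.toRingHom q.toRingEquiv.injective
    have hprime : Prime F := (Ideal.span_singleton_prime hF0).mp
      ((Ideal.Quotient.isDomain_iff_prime _).mp hdom)
    -- gcd is a unit
    obtain ⟨d, u, v, b₀', b₁', hb₀', hb₁', hbez⟩ :
        ∃ d u v b₀' b₁' : Polynomial k,
          b₀ = d * b₀' ∧ b₁ = d * b₁' ∧ b₀ * u + b₁ * v = d := by
      obtain ⟨b₀', hb₀'⟩ := EuclideanDomain.gcd_dvd_left b₀ b₁
      obtain ⟨b₁', hb₁'⟩ := EuclideanDomain.gcd_dvd_right b₀ b₁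
      exact ⟨EuclideanDomain.gcd b₀ b₁, EuclideanDomain.gcdA b₀ b₁, EuclideanDomain.gcdB b₀ b₁,
        b₀', b₁', hb₀', hb₁', (EuclideanDomain.gcd_eq_gcd_ab b₀ b₁).symm⟩
    have hb₁'0 : b₁' ≠ 0 := fun h => hb₁ (by rw [hb₁', h, mul_zero])
    have hfact : F = Polynomial.C d * (Polynomial.C b₀' + Polynomial.C b₁' * Polynomial.X) := by
      rw [hF, hb₀', hb₁']; push_cast [map_mul]; ring
    have hdunit : IsUnit d := by
      rcases hprime.irreducible.isUnit_or_isUnit hfact with h | h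
      · exact Polynomial.isUnit_C.mp h
      · exfalso
        have hdeg0 := Polynomial.degree_eq_zero_of_isUnit h
        have : (Polynomial.C b₀' + Polynomial.C b₁' * Polynomial.X).coeff 1 = b₁' := by
          simp [Polynomial.coeff_C]
        have hne : (Polynomial.C b₀' + Polynomial.C b₁' * Polynomial.X).coeff 1 ≠ 0 := by
          rw [this]; exact hb₁'0
        have h1 := Polynomial.le_degree_of_ne_zero hne
        rw [hdeg0] at h1
        exact absurd h1 (by norm_num)
    have hkey : (Polynomial.C d : Polynomial (Polynomial k)) -
        Polynomial.C b₁ * (Polynomial.C v - Polynomial.C u * Polynomial.X) =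
        Polynomial.C u * F := by
      rw [hF, ← hbez]; push_cast [map_add, map_mul]; ring
    have hmk : (Ideal.Quotient.mk (Ideal.span {F})) (Polynomial.C d) =
        (Ideal.Quotient.mk (Ideal.span {F})) (Polynomial.C b₁) *
          (Ideal.Quotient.mk (Ideal.span {F})) (Polynomial.C v - Polynomial.C u * Polynomial.X) := by
      rw [← map_mul, Ideal.Quotient.mk_eq_mk_iff_sub_mem, hkey]
      exact Ideal.mem_span_singleton.mpr (dvd_mul_left F _)
    have hmkd : IsUnit ((Ideal.Quotient.mk (Ideal.span {F})) (Polynomial.C d)) :=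
      (hdunit.map (Polynomial.C : Polynomial k →+* Polynomial (Polynomial k))).map _
    rw [hmk] at hmkd
    have hmkb₁ : IsUnit ((Ideal.Quotient.mk (Ideal.span {F})) (Polynomial.C b₁)) :=
      by
        haveI : IsDedekindFiniteMonoid (Polynomial (Polynomial k) ⧸ Ideal.span {F}) := inferInstance
        exact isUnit_of_mul_isUnit_left hmkd
    have hqb₁ : IsUnit (q ((Ideal.Quotient.mk (Ideal.span {F})) (Polynomial.C b₁))) :=
      hmkb₁.map q
    obtain ⟨α, hαu, hα⟩ := Polynomial.isUnit_iff.mp hqb₁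
    have hback : (Ideal.Quotient.mk (Ideal.span {F})) (Polynomial.C b₁) =
        (Ideal.Quotient.mk (Ideal.span {F})) (Polynomial.C (Polynomial.C α)) := by
      apply q.injective
      rw [← hα]
      have : (Ideal.Quotient.mk (Ideal.span {F})) (Polynomial.C (Polynomial.C α)) =
          @algebraMap k (Polynomial (Polynomial k) ⧸ Ideal.span {F}) _
            (Ideal.Quotient.commRing _).toCommSemiring.toSemiring _ α :=
          Ideal.Quotient.mk_algebraMap k _ α
      rw [this, AlgEquiv.commutes, Polynomial.algebraMap_eq]
    have hdvd : F ∣ Polynomial.C (b₁ - Polynomial.C α) := by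
      rw [← Ideal.mem_span_singleton, ← Ideal.Quotient.eq_zero_iff_mem, map_sub (Polynomial.C) ,
        map_sub, hback, sub_self]
    rcases eq_or_ne (b₁ - Polynomial.C α) 0 with h0 | h0
    · refine ⟨α, fun hα0 => hb₁ ?_, by rw [← sub_eq_zero]; exact h0⟩
      rw [sub_eq_zero] at h0; rw [h0, hα0, map_zero]
    · exfalso
      have hCne : (Polynomial.C (b₁ - Polynomial.C α) : Polynomial (Polynomial k)) ≠ 0 :=
        fun hcc => h0 (by rwa [Polynomial.C_eq_zero] at hcc)
      have := Polynomial.degree_le_of_dvd hdvd hCne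
      rw [Polynomial.degree_C h0] at this
      have hne : F.coeff 1 ≠ 0 := by rw [hFc1]; exact hb₁
      have h1 := Polynomial.le_degree_of_ne_zero hne
      exact absurd (le_trans h1 this) (by norm_num)

end helpers

section main
open Polynomial
variable {k : Type*} [Field k]

noncomputable def iota (k : Type*) [Field k] :
    MvPolynomial (Fin 2) k ≃ₐ[k] Polynomial (Polynomial k) :=
  (MvPolynomial.finSuccEquiv k 1).trans
    (Polynomial.mapAlgEquiv ((MvPolynomial.finSuccEquiv k 0).trans
      (Polynomial.mapAlgEquiv (MvPolynomial.isEmptyAlgEquiv k (Fin 0)))))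

theorem iota_X0 : iota k (MvPolynomial.X 0) = Polynomial.X := by
  simp [iota, MvPolynomial.finSuccEquiv_X_zero]

theorem iota_X1 : iota k (MvPolynomial.X 1) = Polynomial.C Polynomial.X := by
  have h : (1 : Fin 2) = Fin.succ 0 := rfl
  rw [iota, h, AlgEquiv.trans_apply, MvPolynomial.finSuccEquiv_X_succ]
  simp [MvPolynomial.finSuccEquiv_X_zero]

theorem surj_of_adjoin_top (f g : MvPolynomial (Fin 2) k)
    (h : Algebra.adjoin k {f, g} = ⊤) :
    Function.Surjective (aeval ![f, g] : MvPolynomial (Fin 2) k →ₐ[k] MvPolynomial (Fin 2) k) := by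
  rw [← AlgHom.range_eq_top, ← Algebra.adjoin_range_eq_range_aeval]
  have : Set.range ![f, g] = {f, g} := by
    simp [Matrix.range_cons, Matrix.range_empty, Set.pair_comm]
  rw [this, h]

theorem indep_of_adjoin_top (f g : MvPolynomial (Fin 2) k)
    (h : Algebra.adjoin k {f, g} = ⊤) : AlgebraicIndependent k ![f, g] := by
  rw [algebraicIndependent_iff_injective_aeval]
  exact endo_inj' (aeval ![f, g] : MvPolynomial (Fin 2) k →ₐ[k] MvPolynomial (Fin 2) k).toRingHom
    (surj_of_adjoin_top f g h)

end main

/-- A line f in k[Z,T] (i.e. k[Z,T]/(f) ≅ k^[1]) which is linear with respect to some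
coordinate system (Z₁,T₁), f = b₀(Z₁) + b₁(Z₁)T₁, is a trivial line:
k[Z,T] = k[f]^[1]. -/
theorem line_linear_in_coords_is_trivial {k : Type*} [Field k]
    (f Z₁ T₁ : MvPolynomial (Fin 2) k) (b₀ b₁ : Polynomial k)
    (hline : Nonempty ((MvPolynomial (Fin 2) k ⧸ Ideal.span {f}) ≃ₐ[k] Polynomial k))
    (hcoord : Algebra.adjoin k {Z₁, T₁} = (⊤ : Subalgebra k (MvPolynomial (Fin 2) k)))
    (hf : f = Polynomial.aeval Z₁ b₀ + Polynomial.aeval Z₁ b₁ * T₁) :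
    ∃ g : MvPolynomial (Fin 2) k,
      AlgebraicIndependent k ![f, g] ∧
      Algebra.adjoin k {f, g} = (⊤ : Subalgebra k (MvPolynomial (Fin 2) k)) := by
  -- the automorphism sending X 0 ↦ T₁, X 1 ↦ Z₁
  have hsur : Function.Surjective
      (MvPolynomial.aeval ![T₁, Z₁] : MvPolynomial (Fin 2) k →ₐ[k] MvPolynomial (Fin 2) k) := by
    rw [← AlgHom.range_eq_top, ← Algebra.adjoin_range_eq_range_aeval]
    have : Set.range ![T₁, Z₁] = {Z₁, T₁} := by
      simp [Matrix.range_cons, Matrix.range_empty, Set.pair_comm]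
    rw [this, hcoord]
  have hinj := endo_inj'
    (MvPolynomial.aeval ![T₁, Z₁] : MvPolynomial (Fin 2) k →ₐ[k] MvPolynomial (Fin 2) k).toRingHom
    hsur
  let e : MvPolynomial (Fin 2) k ≃ₐ[k] MvPolynomial (Fin 2) k :=
    AlgEquiv.ofBijective _ ⟨hinj, hsur⟩
  let Ψ : Polynomial (Polynomial k) ≃ₐ[k] MvPolynomial (Fin 2) k := (iota k).symm.trans e
  have hΨX : Ψ Polynomial.X = T₁ := by
    show e ((iota k).symm Polynomial.X) = T₁
    rw [(AlgEquiv.symm_apply_eq _).mpr iota_X0.symm]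
    show (MvPolynomial.aeval ![T₁, Z₁]) (MvPolynomial.X 0) = T₁
    simp
  have hΨCX : Ψ (Polynomial.C Polynomial.X) = Z₁ := by
    show e ((iota k).symm (Polynomial.C Polynomial.X)) = Z₁
    rw [(AlgEquiv.symm_apply_eq _).mpr iota_X1.symm]
    show (MvPolynomial.aeval ![T₁, Z₁]) (MvPolynomial.X 1) = Z₁
    simp
  have hΨC : ∀ p : Polynomial k, Ψ (Polynomial.C p) = Polynomial.aeval Z₁ p := by
    intro p
    have h1 : (Polynomial.C p : Polynomial (Polynomial k)) =
        Polynomial.aeval (Polynomial.C Polynomial.X : Polynomial (Polynomial k)) p := by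
      have := Polynomial.aeval_algHom_apply
        (IsScalarTower.toAlgHom k (Polynomial k) (Polynomial (Polynomial k))) Polynomial.X p
      simp only [Polynomial.aeval_X_left_apply] at this
      exact this.symm
    have h2 := Polynomial.aeval_algHom_apply Ψ.toAlgHom (Polynomial.C Polynomial.X) p
    rw [show (Ψ.toAlgHom (Polynomial.C Polynomial.X) : MvPolynomial (Fin 2) k) = Z₁
      from hΨCX] at h2
    rw [h1]
    exact h2.symm
  have hfF : Ψ (Polynomial.C b₀ + Polynomial.C b₁ * Polynomial.X) = f := by
    rw [map_add, map_mul, hΨC, hΨC, hΨX, ← hf]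
  -- transport the line hypothesis
  have hline' : Nonempty ((Polynomial (Polynomial k) ⧸
      Ideal.span {(Polynomial.C b₀ + Polynomial.C b₁ * Polynomial.X :
        Polynomial (Polynomial k))}) ≃ₐ[k] Polynomial k) := by
    obtain ⟨q⟩ := hline
    exact ⟨(Ideal.quotientEquivAlg _ (Ideal.span {f}) Ψ
      (by rw [Ideal.map_span, Set.image_singleton]
          exact congrArg (fun x => Ideal.span {x}) hfF.symm)).trans q⟩
  have hb₀mem : Polynomial.aeval Z₁ b₀ ∈ Algebra.adjoin k ({Z₁} : Set (MvPolynomial (Fin 2) k)) := by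
    rw [Algebra.adjoin_singleton_eq_range_aeval]
    exact ⟨b₀, rfl⟩
  rcases core b₀ b₁ hline' with ⟨c, hc, hb₁c⟩ | ⟨hb₁0, c, a, hc, hb₀e⟩
  · -- f = b₀(Z₁) + c T₁ : take g = Z₁
    have hT₁ : T₁ = c⁻¹ • (f - Polynomial.aeval Z₁ b₀) := by
      rw [hf, hb₁c, Polynomial.aeval_C, add_sub_cancel_left, Algebra.smul_def, ← mul_assoc,
        ← map_mul, inv_mul_cancel₀ hc, map_one, one_mul]
    have hadj : Algebra.adjoin k {f, Z₁} = ⊤ := by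
      rw [eq_top_iff, ← hcoord]
      apply Algebra.adjoin_le
      intro x hx
      rcases hx with rfl | hx
      · -- x = Z₁
        exact Algebra.subset_adjoin (Set.mem_insert_of_mem _ rfl)
      · -- x = T₁
        rcases hx with rfl
        rw [hT₁]
        refine Subalgebra.smul_mem _ (sub_mem (Algebra.subset_adjoin (Set.mem_insert _ _)) ?_) _
        have hmono : Algebra.adjoin k ({Z₁} : Set (MvPolynomial (Fin 2) k)) ≤
            Algebra.adjoin k {f, Z₁} := Algebra.adjoin_mono (by simp)
        exact hmono hb₀mem
    exact ⟨Z₁, indep_of_adjoin_top _ _ hadj, hadj⟩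
  · -- f = c (Z₁ - a) : take g = T₁
    have hfz : f = algebraMap k _ c * (Z₁ - algebraMap k _ a) := by
      rw [hf, hb₁0, map_zero, zero_mul, add_zero, hb₀e, map_mul, map_sub, Polynomial.aeval_C,
        Polynomial.aeval_X, Polynomial.aeval_C]
    have hZ₁ : Z₁ = c⁻¹ • f + algebraMap k _ a := by
      rw [hfz, Algebra.smul_def, ← mul_assoc, ← map_mul, inv_mul_cancel₀ hc, map_one, one_mul,
        sub_add_cancel]
    have hadj : Algebra.adjoin k {f, T₁} = ⊤ := by
      rw [eq_top_iff, ← hcoord]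
      apply Algebra.adjoin_le
      intro x hx
      rcases hx with rfl | hx
      · -- x = Z₁
        rw [hZ₁]
        refine add_mem (Subalgebra.smul_mem _ (Algebra.subset_adjoin (Set.mem_insert _ _)) _) ?_
        exact Subalgebra.algebraMap_mem _ a
      · -- x = T₁
        rcases hx with rfl
        exact Algebra.subset_adjoin (Set.mem_insert_of_mem _ rfl)
    exact ⟨T₁, indep_of_adjoin_top _ _ hadj, hadj⟩
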